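/- Let M = [[A, B],[B^T, C]] be a symmetric positive semidefinite block matrix. Then rank M = rank A + rank (C - B^T A^† B), i.e., the rank of M equals the rank of A plus the rank of the generalized Schur complement of A in M. -/

import Mathlib

open Matrix

open scoped Classical

/-- Moore–Penrose pseudoinverse of a real matrix, defined via the four Penrose
conditions (which determine it uniquely when it exists). -/
noncomputable def pinv {n m : ℕ} (A : Matrix (Fin n) (Fin m) ℝ) : Matrix (Fin m) (Fin n) ℝ :=
  if h : ∃ X : Matrix (Fin m) (Fin n) ℝ,
      A * X * A = A ∧ X * A * X = X ∧ (A * X)ᵀ = A * X ∧ (X * A)ᵀ = X * A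
  then h.choose else 0

lemma exists_penrose {n : ℕ} {A : Matrix (Fin n) (Fin n) ℝ} (hA : Aᵀ = A) :
    ∃ X : Matrix (Fin n) (Fin n) ℝ,
      A * X * A = A ∧ X * A * X = X ∧ (A * X)ᵀ = A * X ∧ (X * A)ᵀ = X * A := by
  have hH : A.IsHermitian := by
    rwa [Matrix.IsHermitian, Matrix.conjTranspose_eq_transpose_of_trivial]
  set U : Matrix (Fin n) (Fin n) ℝ := (hH.eigenvectorUnitary : Matrix (Fin n) (Fin n) ℝ) with hU
  have hUU' : star U * U = 1 := Matrix.mem_unitaryGroup_iff'.mp hH.eigenvectorUnitary.2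
  have hsU : star U = Uᵀ := by
    rw [Matrix.star_eq_conjTranspose, Matrix.conjTranspose_eq_transpose_of_trivial]
  set d : Fin n → ℝ := RCLike.ofReal ∘ hH.eigenvalues with hd
  have hspec : A = U * diagonal d * star U := hH.spectral_theorem
  have key : ∀ f g : Fin n → ℝ, (U * diagonal f * star U) * (U * diagonal g * star U)
      = U * diagonal (fun i => f i * g i) * star U := by
    intro f g
    simp only [Matrix.mul_assoc]
    rw [← Matrix.mul_assoc (star U) U, hUU', Matrix.one_mul,
      ← Matrix.mul_assoc (diagonal f), Matrix.diagonal_mul_diagonal]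
  have hsym : ∀ f : Fin n → ℝ, (U * diagonal f * star U)ᵀ = U * diagonal f * star U := by
    intro f
    rw [hsU, Matrix.transpose_mul, Matrix.transpose_mul, Matrix.transpose_transpose,
      Matrix.diagonal_transpose, Matrix.mul_assoc]
  refine ⟨U * diagonal (fun i => (d i)⁻¹) * star U, ?_, ?_, ?_, ?_⟩
  · rw [hspec, key, key]
    congr! 4 with i
    rcases eq_or_ne (d i) 0 with h | h
    · simp [h]
    · field_simp
  · rw [hspec, key, key]
    congr! 4 with i
    rcases eq_or_ne (d i) 0 with h | h
    · simp [h]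
    · field_simp
  · rw [hspec, key]; exact hsym _
  · rw [hspec, key]; exact hsym _

lemma pinv_penrose {n : ℕ} {A : Matrix (Fin n) (Fin n) ℝ} (hA : Aᵀ = A) :
    A * pinv A * A = A ∧ pinv A * A * pinv A = pinv A ∧
      (A * pinv A)ᵀ = A * pinv A ∧ (pinv A * A)ᵀ = pinv A * A := by
  rw [pinv, dif_pos (exists_penrose hA)]
  exact (exists_penrose hA).choose_spec

lemma finrank_submodule_prod {M N : Type*} [AddCommGroup M] [AddCommGroup N]
    [Module ℝ M] [Module ℝ N] [FiniteDimensional ℝ M] [FiniteDimensional ℝ N]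
    (p : Submodule ℝ M) (q : Submodule ℝ N) :
    Module.finrank ℝ (p.prod q) = Module.finrank ℝ p + Module.finrank ℝ q := by
  rw [← Module.finrank_prod (R := ℝ)]
  refine LinearEquiv.finrank_eq ?_
  exact { toFun := fun x => (⟨x.1.1, x.2.1⟩, ⟨x.1.2, x.2.2⟩),
          invFun := fun y => ⟨(y.1.1, y.2.1), ⟨y.1.2, y.2.2⟩⟩,
          map_add' := fun _ _ => rfl, map_smul' := fun _ _ => rfl,
          left_inv := fun _ => rfl, right_inv := fun _ => rfl }

/-- rank of a block diagonal matrix is the sum of the ranks. -/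
lemma rank_fromBlocks_diag {n m : ℕ} (A : Matrix (Fin n) (Fin n) ℝ)
    (D : Matrix (Fin m) (Fin m) ℝ) :
    (fromBlocks A 0 0 D).rank = A.rank + D.rank := by
  let e : ((Fin n ⊕ Fin m) → ℝ) ≃ₗ[ℝ] (Fin n → ℝ) × (Fin m → ℝ) :=
    LinearEquiv.sumArrowLequivProdArrow (Fin n) (Fin m) ℝ ℝ
  have he : ∀ (p : Fin n → ℝ) (q : Fin m → ℝ), e (Sum.elim p q) = (p, q) := fun p q => rfl
  have hmap : (LinearMap.range (fromBlocks A 0 0 D).mulVecLin).map (e : _ →ₗ[ℝ] _)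
      = (LinearMap.range A.mulVecLin).prod (LinearMap.range D.mulVecLin) := by
    ext ⟨u, w⟩
    simp only [Submodule.mem_map, LinearMap.mem_range, Submodule.mem_prod, mulVecLin_apply]
    constructor
    · rintro ⟨f, ⟨v, rfl⟩, h⟩
      have hv : (fromBlocks A 0 0 D) *ᵥ v
          = Sum.elim (A *ᵥ (v ∘ Sum.inl)) (D *ᵥ (v ∘ Sum.inr)) := by
        conv_lhs => rw [← Sum.elim_comp_inl_inr v]
        rw [fromBlocks_mulVec]
        simp
      rw [hv] at h
      exact ⟨⟨v ∘ Sum.inl, congrArg Prod.fst h⟩, ⟨v ∘ Sum.inr, congrArg Prod.snd h⟩⟩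
    · rintro ⟨⟨a, ha⟩, ⟨b, hb⟩⟩
      refine ⟨Sum.elim u w, ⟨Sum.elim a b, ?_⟩, rfl⟩
      rw [fromBlocks_mulVec]
      simp [ha, hb]
  have h1 : (fromBlocks A 0 0 D).rank
      = Module.finrank ℝ ((LinearMap.range A.mulVecLin).prod (LinearMap.range D.mulVecLin)) := by
    rw [Matrix.rank, ← hmap, LinearEquiv.finrank_map_eq]
  rw [h1, Matrix.rank, Matrix.rank, finrank_submodule_prod]

/-- For a psd block matrix M = [[A,B],[Bᵀ,C]], rank M = rank A + rank (M/A). -/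
theorem stmt2 {n m : ℕ} (A : Matrix (Fin n) (Fin n) ℝ) (B : Matrix (Fin n) (Fin m) ℝ)
    (C : Matrix (Fin m) (Fin m) ℝ) (hA : Aᵀ = A) (hC : Cᵀ = C)
    (hM : (Matrix.fromBlocks A B Bᵀ C).PosSemidef) :
    (Matrix.fromBlocks A B Bᵀ C).rank = A.rank + (C - Bᵀ * pinv A * B).rank := by
  obtain ⟨h1, h2, h3, h4⟩ := pinv_penrose hA
  set X := pinv A with hX
  -- kernel of A is contained in kernel of Bᵀ
  have hker : ∀ v : Fin n → ℝ, A *ᵥ v = 0 → Bᵀ *ᵥ v = 0 := by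
    intro v hv
    have hc : ∀ w : Fin m → ℝ, v ⬝ᵥ (B *ᵥ w) = 0 := by
      intro w
      by_contra hcne
      have hswap : w ⬝ᵥ (Bᵀ *ᵥ v) = v ⬝ᵥ (B *ᵥ w) := by
        rw [dotProduct_mulVec v, ← mulVec_transpose, dotProduct_comm]
      set c := v ⬝ᵥ (B *ᵥ w) with hcdef
      set dd := w ⬝ᵥ (C *ᵥ w) with hddef
      set t : ℝ := (-(dd + 1)) / (2 * c) with ht
      have hpos := hM.dotProduct_mulVec_nonneg (Sum.elim (t • v) w)
      simp only [star_trivial, fromBlocks_mulVec, Sum.elim_comp_inl, Sum.elim_comp_inr,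
        sumElim_dotProduct_sumElim, mulVec_smul, hv, smul_zero, zero_add, add_zero,
        smul_dotProduct, dotProduct_smul, dotProduct_add, smul_eq_mul, hswap] at hpos
      have htc : t * c = -(dd + 1) / 2 := by
        rw [ht]
        field_simp
      rw [htc] at hpos
      linarith
    have := hc (Bᵀ *ᵥ v)
    rw [dotProduct_mulVec v, ← mulVec_transpose] at this
    exact dotProduct_self_eq_zero.mp this
  -- B = A * X * B
  have hAXB : A * X * B = B := by
    have hNsym : (1 - A * X)ᵀ = 1 - A * X := by
      rw [transpose_sub, transpose_one, h3]
    have hNA : (1 - A * X) * A = 0 := by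
      rw [sub_mul, one_mul, h1, sub_self]
    have hAN : A * (1 - A * X) = 0 := by
      have := congrArg transpose hNA
      rwa [transpose_mul, hNsym, hA, transpose_zero] at this
    have hBN : Bᵀ * (1 - A * X) = 0 := by
      ext i j
      have hcol : A *ᵥ ((1 - A * X) *ᵥ Pi.single j 1) = 0 := by
        rw [mulVec_mulVec, hAN, zero_mulVec]
      have := congrFun (hker _ hcol) i
      rw [mulVec_mulVec] at this
      simpa [mulVec_single] using this
    have : Bᵀ * (A * X) = Bᵀ := by
      have := hBN
      rw [Matrix.mul_sub, Matrix.mul_one, sub_eq_zero] at this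
      exact this.symm
    have := congrArg transpose this
    rwa [transpose_mul, h3, transpose_transpose] at this
  have hBXA : Bᵀ * Xᵀ * A = Bᵀ := by
    have := congrArg transpose hAXB
    rw [transpose_mul, transpose_mul, hA] at this
    rwa [← Matrix.mul_assoc] at this
  set S := C - Bᵀ * X * B with hS
  set L : Matrix (Fin n ⊕ Fin m) (Fin n ⊕ Fin m) ℝ := fromBlocks 1 0 (Bᵀ * Xᵀ) 1 with hL
  have hfact : fromBlocks A B Bᵀ C = L * fromBlocks A 0 0 S * Lᵀ := by
    rw [hL, fromBlocks_transpose, fromBlocks_multiply, fromBlocks_multiply]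
    simp only [transpose_mul, transpose_one, transpose_zero, transpose_transpose,
      Matrix.one_mul, Matrix.mul_one, Matrix.zero_mul, Matrix.mul_zero, add_zero, zero_add]
    have e12 : A * (X * B) = B := by rw [← Matrix.mul_assoc, hAXB]
    have e22 : Bᵀ * Xᵀ * A * (X * B) + S = C := by
      rw [hBXA, ← Matrix.mul_assoc, hS]
      abel
    rw [e12, e22, hBXA]
  have hdetL : IsUnit (L.det) := by
    rw [hL, det_fromBlocks_zero₁₂, det_one, det_one, mul_one]
    exact isUnit_one
  have hdetLT : IsUnit (Lᵀ.det) := by rwa [det_transpose]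
  rw [hfact, rank_mul_eq_left_of_isUnit_det _ _ hdetLT,
    rank_mul_eq_right_of_isUnit_det _ _ hdetL, rank_fromBlocks_diag]
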